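/- Let S be the unit square [0,1]×[0,1] and p a point in S. For every x > 0, the set of points q ∈ S with Euclidean distance at least √2 − x from p is contained in a closed disk of radius 2√2·x centered at some point of the plane (in fact, centered at the corner of S opposite the corner nearest p). -/

import Mathlib

set_option maxHeartbeats 1000000
open Real

lemma dist_coords (u v : EuclideanSpace ℝ (Fin 2)) :
    dist u v = Real.sqrt ((u 0 - v 0)^2 + (u 1 - v 1)^2) := by
  rw [EuclideanSpace.dist_eq, Fin.sum_univ_two]
  simp [Real.dist_eq, sq_abs]

lemma key (p0 p1 q0 q1 x : ℝ)
    (hp0 : 0 ≤ p0) (hp0' : p0 ≤ 1/2) (hp1 : 0 ≤ p1) (hp1' : p1 ≤ 1/2)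
    (hq0 : 0 ≤ q0) (hq0' : q0 ≤ 1) (hq1 : 0 ≤ q1) (hq1' : q1 ≤ 1)
    (hx : 0 < x) (hx' : x ≤ 1/4)
    (hd : (Real.sqrt 2 - x)^2 ≤ (q0-p0)^2 + (q1-p1)^2) :
    (1-q0)^2 + (1-q1)^2 ≤ (2 * Real.sqrt 2 * x)^2 := by
  have hr2 : (Real.sqrt 2)^2 = 2 := Real.sq_sqrt (by norm_num)
  have hr1 : (1:ℝ) ≤ Real.sqrt 2 := by nlinarith [Real.sqrt_nonneg 2]
  have hr3 : Real.sqrt 2 ≤ 3/2 := by nlinarith [Real.sqrt_nonneg 2]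
  have hexp : (Real.sqrt 2 - x)^2 = 2 - 2*Real.sqrt 2*x + x^2 := by
    rw [sub_sq, hr2]
  rw [hexp] at hd
  have ha2 : (q0 - p0)^2 > 1/4 := by nlinarith [sq_nonneg (q1 - p1)]
  have hb2 : (q1 - p1)^2 > 1/4 := by nlinarith [sq_nonneg (q0 - p0)]
  have ha : q0 - p0 > 1/2 := by nlinarith
  have hb : q1 - p1 > 1/2 := by nlinarith
  have hq0h : q0 ≥ 1/2 := by linarith
  have hq1h : q1 ≥ 1/2 := by linarith
  have ha3 : (q0 - p0)^2 ≤ q0^2 := by nlinarith [mul_nonneg hp0 (by linarith : (0:ℝ) ≤ 2*q0 - p0)]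
  have hb3 : (q1 - p1)^2 ≤ q1^2 := by nlinarith [mul_nonneg hp1 (by linarith : (0:ℝ) ≤ 2*q1 - p1)]
  have hC : 2 - 2*Real.sqrt 2*x + x^2 ≤ q0^2 + q1^2 := by linarith
  have hα : 1 - q0^2 ≤ 2 * Real.sqrt 2 * x - x^2 := by nlinarith [sq_nonneg q1]
  have hβ : 1 - q1^2 ≤ 2 * Real.sqrt 2 * x - x^2 := by nlinarith [sq_nonneg q0]
  have hαb : 1 - q0 ≤ (4 * Real.sqrt 2 / 3) * x := by
    nlinarith [mul_nonneg (sub_nonneg.2 hq0') (sub_nonneg.2 hq0h)]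
  have hβb : 1 - q1 ≤ (4 * Real.sqrt 2 / 3) * x := by
    nlinarith [mul_nonneg (sub_nonneg.2 hq1') (sub_nonneg.2 hq1h)]
  have hα2 := mul_self_le_mul_self (by linarith : (0:ℝ) ≤ 1 - q0) hαb
  have hβ2 := mul_self_le_mul_self (by linarith : (0:ℝ) ≤ 1 - q1) hβb
  have hxx : 0 < x^2 := by positivity
  nlinarith [hα2, hβ2]

/-- The unit square in the Euclidean plane. -/
def unitSquare : Set (EuclideanSpace ℝ (Fin 2)) :=
  {p | p 0 ∈ Set.Icc (0:ℝ) 1 ∧ p 1 ∈ Set.Icc (0:ℝ) 1}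

/-- For every point `p` of the unit square and every `x > 0`, the set
of points `q` of the square with `dist p q ≥ √2 - x` is contained in a closed disk
of radius `2√2·x` around some point of the plane. -/
theorem square_diametric_partners_local
    (p : EuclideanSpace ℝ (Fin 2)) (hp : p ∈ unitSquare) (x : ℝ) (hx : 0 < x) :
    ∃ c : EuclideanSpace ℝ (Fin 2),
      ∀ q ∈ unitSquare, Real.sqrt 2 - x ≤ dist p q →
        dist q c ≤ 2 * Real.sqrt 2 * x := by
  obtain ⟨⟨hp00, hp01⟩, hp10, hp11⟩ := hp
  have hrpos : (0:ℝ) < Real.sqrt 2 := by positivity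
  have hRnn : 0 ≤ 2 * Real.sqrt 2 * x := by positivity
  -- reduce the goal to a squared inequality
  have final : ∀ (c : EuclideanSpace ℝ (Fin 2)) (q : EuclideanSpace ℝ (Fin 2)),
      (q 0 - c 0)^2 + (q 1 - c 1)^2 ≤ (2 * Real.sqrt 2 * x)^2 →
      dist q c ≤ 2 * Real.sqrt 2 * x := by
    intro c q h
    rw [dist_coords]
    calc Real.sqrt ((q 0 - c 0)^2 + (q 1 - c 1)^2)
        ≤ Real.sqrt ((2 * Real.sqrt 2 * x)^2) := Real.sqrt_le_sqrt h
      _ = 2 * Real.sqrt 2 * x := Real.sqrt_sq hRnn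
  by_cases hx4 : 1/4 ≤ x
  · -- big x: the disk of radius 2√2x around (1-2x, 1-2x) contains the square
    refine ⟨(WithLp.equiv 2 _).symm ![1 - 2*x, 1 - 2*x], fun q hq _ => ?_⟩
    obtain ⟨⟨hq00, hq01⟩, hq10, hq11⟩ := hq
    apply final
    simp only [WithLp.equiv_symm_apply, PiLp.toLp_apply, Matrix.cons_val_zero, Matrix.cons_val_one,
      Matrix.head_cons]
    have h2 : (Real.sqrt 2)^2 = 2 := Real.sq_sqrt (by norm_num)
    nlinarith [mul_nonneg (by linarith : (0:ℝ) ≤ 1 - q 0) (by linarith : (0:ℝ) ≤ q 0 - 1 + 4*x),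
      mul_nonneg (by linarith : (0:ℝ) ≤ 1 - q 1) (by linarith : (0:ℝ) ≤ q 1 - 1 + 4*x)]
  · push_neg at hx4
    have hsq : ∀ q : EuclideanSpace ℝ (Fin 2), Real.sqrt 2 - x ≤ dist p q →
        (Real.sqrt 2 - x)^2 ≤ (q 0 - p 0)^2 + (q 1 - p 1)^2 := by
      intro q hd
      have h0 : 0 ≤ (q 0 - p 0)^2 + (q 1 - p 1)^2 := by positivity
      have h1 : (1:ℝ) ≤ Real.sqrt 2 := by
        nlinarith [Real.sq_sqrt (show (0:ℝ) ≤ 2 by norm_num), Real.sqrt_nonneg 2]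
      have := pow_le_pow_left₀ (by linarith : (0:ℝ) ≤ Real.sqrt 2 - x) hd 2
      calc (Real.sqrt 2 - x)^2 ≤ (dist p q)^2 := this
        _ = (q 0 - p 0)^2 + (q 1 - p 1)^2 := by
            rw [dist_coords, Real.sq_sqrt (by positivity)]; ring
    by_cases h0 : p 0 ≤ 1/2 <;> by_cases h1 : p 1 ≤ 1/2 <;> [skip; push_neg at h1; push_neg at h0; push_neg at h0 h1]
    · refine ⟨(WithLp.equiv 2 _).symm ![1, 1], fun q hq hd => ?_⟩
      obtain ⟨⟨hq00, hq01⟩, hq10, hq11⟩ := hq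
      apply final
      simp only [WithLp.equiv_symm_apply, PiLp.toLp_apply, Matrix.cons_val_zero, Matrix.cons_val_one,
        Matrix.head_cons]
      have hk := key (p 0) (p 1) (q 0) (q 1) x hp00 h0 hp10 h1 hq00 hq01 hq10 hq11 hx
        (le_of_lt hx4) (by linarith [hsq q hd, sq_nonneg (q 0 - p 0)] )
      calc (q 0 - 1)^2 + (q 1 - 1)^2 = (1 - q 0)^2 + (1 - q 1)^2 := by ring
        _ ≤ _ := hk
    · refine ⟨(WithLp.equiv 2 _).symm ![1, 0], fun q hq hd => ?_⟩
      obtain ⟨⟨hq00, hq01⟩, hq10, hq11⟩ := hq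
      apply final
      simp only [WithLp.equiv_symm_apply, PiLp.toLp_apply, Matrix.cons_val_zero, Matrix.cons_val_one,
        Matrix.head_cons]
      have hk := key (p 0) (1 - p 1) (q 0) (1 - q 1) x (by linarith) (by linarith)
        (by linarith) (by linarith) (by linarith) (by linarith) (by linarith) (by linarith)
        hx (le_of_lt hx4)
        (by calc (Real.sqrt 2 - x)^2 ≤ (q 0 - p 0)^2 + (q 1 - p 1)^2 := hsq q hd
              _ = (q 0 - (p 0))^2 + (1 - q 1 - (1 - p 1))^2 := by ring)
      calc (q 0 - 1)^2 + (q 1 - 0)^2 = (1-(q 0))^2 + (1-(1 - q 1))^2 := by ring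
        _ ≤ _ := hk
    · refine ⟨(WithLp.equiv 2 _).symm ![0, 1], fun q hq hd => ?_⟩
      obtain ⟨⟨hq00, hq01⟩, hq10, hq11⟩ := hq
      apply final
      simp only [WithLp.equiv_symm_apply, PiLp.toLp_apply, Matrix.cons_val_zero, Matrix.cons_val_one,
        Matrix.head_cons]
      have hk := key (1 - p 0) (p 1) (1 - q 0) (q 1) x (by linarith) (by linarith)
        (by linarith) (by linarith) (by linarith) (by linarith) (by linarith) (by linarith)
        hx (le_of_lt hx4)
        (by calc (Real.sqrt 2 - x)^2 ≤ (q 0 - p 0)^2 + (q 1 - p 1)^2 := hsq q hd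
              _ = (1 - q 0 - (1 - p 0))^2 + (q 1 - (p 1))^2 := by ring)
      calc (q 0 - 0)^2 + (q 1 - 1)^2 = (1-(1 - q 0))^2 + (1-(q 1))^2 := by ring
        _ ≤ _ := hk
    · refine ⟨(WithLp.equiv 2 _).symm ![0, 0], fun q hq hd => ?_⟩
      obtain ⟨⟨hq00, hq01⟩, hq10, hq11⟩ := hq
      apply final
      simp only [WithLp.equiv_symm_apply, PiLp.toLp_apply, Matrix.cons_val_zero, Matrix.cons_val_one,
        Matrix.head_cons]
      have hk := key (1 - p 0) (1 - p 1) (1 - q 0) (1 - q 1) x (by linarith) (by linarith)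
        (by linarith) (by linarith) (by linarith) (by linarith) (by linarith) (by linarith)
        hx (le_of_lt hx4)
        (by calc (Real.sqrt 2 - x)^2 ≤ (q 0 - p 0)^2 + (q 1 - p 1)^2 := hsq q hd
              _ = (1 - q 0 - (1 - p 0))^2 + (1 - q 1 - (1 - p 1))^2 := by ring)
      calc (q 0 - 0)^2 + (q 1 - 0)^2 = (1-(1 - q 0))^2 + (1-(1 - q 1))^2 := by ring
        _ ≤ _ := hk
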